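/- Let 0 < p < 1 and let (M, d, 0) be a pointed metric space with M = {0, x, y} such that none of the three p-triangle inequalities among d(x,0), d(y,0), d(x,y) is an equality. Define d'(x,z) := ((d^p(x,0) + d^p(x,y) - d^p(y,0))/2)^{1/p}, d'(y,z) := ((d^p(y,0) + d^p(x,y) - d^p(x,0))/2)^{1/p}, d'(0,z) := ((d^p(x,0) + d^p(y,0) - d^p(x,y))/2)^{1/p}, and d' = d on {0,x,y}. Then d' is a p-metric on M' = {0, x, y, z}, i.e., (M', d'^p) is a metric space. -/
import Mathlib


set_option maxHeartbeats 4000000 in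
/-- the Steiner-point extension of a three-point `p`-metric space
`{0, x, y}` (with strict `p`-triangle inequalities) by a fourth point `z` is a
`p`-metric on `{0, x, y, z}`; the points are labelled `0, 1, 2, 3 : Fin 4`
(base point `0`, `x = 1`, `y = 2`, `z = 3`). -/
theorem stmt_8 (p : ℝ) (hp0 : 0 < p) (hp1 : p < 1)
    (dx dy dxy : ℝ) (hdx : 0 < dx) (hdy : 0 < dy) (hdxy : 0 < dxy)
    (t1 : dx ^ p < dy ^ p + dxy ^ p) (t2 : dy ^ p < dx ^ p + dxy ^ p)
    (t3 : dxy ^ p < dx ^ p + dy ^ p)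
    (D : Fin 4 → Fin 4 → ℝ)
    (hsym : ∀ i j, D i j = D j i) (hdiag : ∀ i, D i i = 0)
    (h01 : D 0 1 = dx) (h02 : D 0 2 = dy) (h12 : D 1 2 = dxy)
    (h13 : D 1 3 = ((dx ^ p + dxy ^ p - dy ^ p) / 2) ^ (1 / p))
    (h23 : D 2 3 = ((dy ^ p + dxy ^ p - dx ^ p) / 2) ^ (1 / p))
    (h03 : D 0 3 = ((dx ^ p + dy ^ p - dxy ^ p) / 2) ^ (1 / p)) :
    (∀ i j : Fin 4, i ≠ j → 0 < D i j) ∧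
    (∀ i j k : Fin 4, D i k ^ p ≤ D i j ^ p + D j k ^ p) := by
  have hpne : p ≠ 0 := hp0.ne'
  have ha : 0 < dx ^ p := Real.rpow_pos_of_pos hdx p
  have hb : 0 < dy ^ p := Real.rpow_pos_of_pos hdy p
  have hc : 0 < dxy ^ p := Real.rpow_pos_of_pos hdxy p
  have hu : 0 < (dx ^ p + dxy ^ p - dy ^ p) / 2 := by linarith
  have hv : 0 < (dy ^ p + dxy ^ p - dx ^ p) / 2 := by linarith
  have hw : 0 < (dx ^ p + dy ^ p - dxy ^ p) / 2 := by linarith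
  have key : ∀ X : ℝ, 0 < X → (X ^ (1 / p)) ^ p = X := by
    intro X hX
    rw [← Real.rpow_mul hX.le, one_div, inv_mul_cancel₀ hpne, Real.rpow_one]
  have p01 : 0 < D 0 1 := h01 ▸ hdx
  have p02 : 0 < D 0 2 := h02 ▸ hdy
  have p12 : 0 < D 1 2 := h12 ▸ hdxy
  have p13 : 0 < D 1 3 := by rw [h13]; exact Real.rpow_pos_of_pos hu _
  have p23 : 0 < D 2 3 := by rw [h23]; exact Real.rpow_pos_of_pos hv _
  have p03 : 0 < D 0 3 := by rw [h03]; exact Real.rpow_pos_of_pos hw _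
  have p10 : 0 < D 1 0 := by rw [hsym]; exact p01
  have p20 : 0 < D 2 0 := by rw [hsym]; exact p02
  have p21 : 0 < D 2 1 := by rw [hsym]; exact p12
  have p31 : 0 < D 3 1 := by rw [hsym]; exact p13
  have p32 : 0 < D 3 2 := by rw [hsym]; exact p23
  have p30 : 0 < D 3 0 := by rw [hsym]; exact p03
  have qd : ∀ i, D i i ^ p = 0 := fun i => by rw [hdiag]; exact Real.zero_rpow hpne
  have q01 : D 0 1 ^ p = dx ^ p := by rw [h01]
  have q02 : D 0 2 ^ p = dy ^ p := by rw [h02]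
  have q12 : D 1 2 ^ p = dxy ^ p := by rw [h12]
  have q13 : D 1 3 ^ p = (dx ^ p + dxy ^ p - dy ^ p) / 2 := by rw [h13]; exact key _ hu
  have q23 : D 2 3 ^ p = (dy ^ p + dxy ^ p - dx ^ p) / 2 := by rw [h23]; exact key _ hv
  have q03 : D 0 3 ^ p = (dx ^ p + dy ^ p - dxy ^ p) / 2 := by rw [h03]; exact key _ hw
  have q10 : D 1 0 ^ p = dx ^ p := by rw [hsym]; exact q01
  have q20 : D 2 0 ^ p = dy ^ p := by rw [hsym]; exact q02
  have q21 : D 2 1 ^ p = dxy ^ p := by rw [hsym]; exact q12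
  have q31 : D 3 1 ^ p = (dx ^ p + dxy ^ p - dy ^ p) / 2 := by rw [hsym]; exact q13
  have q32 : D 3 2 ^ p = (dy ^ p + dxy ^ p - dx ^ p) / 2 := by rw [hsym]; exact q23
  have q30 : D 3 0 ^ p = (dx ^ p + dy ^ p - dxy ^ p) / 2 := by rw [hsym]; exact q03
  constructor
  · intro i j hij
    fin_cases i <;> fin_cases j <;>
      first
        | exact absurd rfl hij
        | assumption
  · have e0 : (⟨0, by omega⟩ : Fin 4) = 0 := rfl
    have e1 : (⟨1, by omega⟩ : Fin 4) = 1 := rfl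
    have e2 : (⟨2, by omega⟩ : Fin 4) = 2 := rfl
    have e3 : (⟨3, by omega⟩ : Fin 4) = 3 := rfl
    intro i j k
    fin_cases i <;> fin_cases j <;> fin_cases k <;>
      simp only [e0, e1, e2, e3, qd, q01, q02, q12, q13, q23, q03, q10, q20, q21, q31,
        q32, q30] <;>
      linarith
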